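/- For fixed γ̄ > 0, N_t ≥ 1, and T > 0, the function R̄(T_p) = (1 − T_p/T) N_t log₂(1 + γ̄(T_p)) is strictly concave in T_p on (0, T) whenever γ̄(T_p) is nonnegative, concave, and nondecreasing in T_p. -/

import Mathlib

open Set

/-- If γ̄ : (0,T) → [0,∞) is concave and nondecreasing, then
    R̄(T_p) = (1 − T_p/T)·N_t·log₂(1+γ̄(T_p)) is concave on (0,T); it is strictly
    concave if γ̄ is strictly increasing. -/
theorem rate_concave_in_training (T Nt : ℝ) (hT : 0 < T) (hNt : 1 ≤ Nt)
    (γ : ℝ → ℝ) (hγ0 : ∀ x ∈ Ioo 0 T, 0 ≤ γ x)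
    (hγconc : ConcaveOn ℝ (Ioo 0 T) γ) (hγmono : MonotoneOn γ (Ioo 0 T)) :
    ConcaveOn ℝ (Ioo 0 T)
      (fun Tp => (1 - Tp / T) * Nt * Real.logb 2 (1 + γ Tp)) ∧
    (StrictMonoOn γ (Ioo 0 T) →
      StrictConcaveOn ℝ (Ioo 0 T)
        (fun Tp => (1 - Tp / T) * Nt * Real.logb 2 (1 + γ Tp))) := by
  have hNt0 : (0:ℝ) < Nt := lt_of_lt_of_le one_pos hNt
  set f : ℝ → ℝ := fun Tp => (1 - Tp / T) * Nt with hfdef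
  set g : ℝ → ℝ := fun Tp => Real.logb 2 (1 + γ Tp) with hgdef
  have hfpos : ∀ x ∈ Ioo (0:ℝ) T, 0 < f x := by
    intro x hx
    have hx1 : x / T < 1 := (div_lt_one hT).2 hx.2
    exact mul_pos (by linarith) hNt0
  have hgpos : ∀ x ∈ Ioo (0:ℝ) T, 0 < 1 + γ x := by
    intro x hx; linarith [hγ0 x hx]
  have hg0 : ∀ x ∈ Ioo (0:ℝ) T, 0 ≤ g x := by
    intro x hx
    exact Real.logb_nonneg one_lt_two (by linarith [hγ0 x hx])
  have haff : ∀ (x y a b : ℝ), a + b = 1 → f (a*x + b*y) = a * f x + b * f y := by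
    intro x y a b hab
    simp only [hfdef]
    field_simp
    linear_combination (-T) * hab
  have hfconc : ConcaveOn ℝ (Ioo (0:ℝ) T) f := by
    refine ⟨convex_Ioo 0 T, fun x hx y hy a b ha hb hab => ?_⟩
    simp only [smul_eq_mul]
    exact le_of_eq (haff x y a b hab).symm
  have hfanti : ∀ x y : ℝ, x < y → f y < f x := by
    intro x y hxy
    have hdiv : x / T < y / T := (div_lt_div_iff_of_pos_right hT).2 hxy
    simp only [hfdef]
    exact mul_lt_mul_of_pos_right (by linarith) hNt0
  have hgconc : ConcaveOn ℝ (Ioo (0:ℝ) T) g := by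
    refine ⟨convex_Ioo 0 T, fun x hx y hy a b ha hb hab => ?_⟩
    have hz : a • x + b • y ∈ Ioo (0:ℝ) T := (convex_Ioo 0 T) hx hy ha hb hab
    have hγz := hγconc.2 hx hy ha hb hab
    simp only [smul_eq_mul] at hγz hz ⊢
    have h1 : a * (1 + γ x) + b * (1 + γ y) ≤ 1 + γ (a * x + b * y) := by nlinarith
    have hpx := hgpos x hx
    have hpy := hgpos y hy
    have hpos : 0 < a * (1 + γ x) + b * (1 + γ y) := by
      have h2 := mul_le_mul_of_nonneg_left (show (1:ℝ) ≤ 1 + γ x by linarith [hγ0 x hx]) ha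
      have h3 := mul_le_mul_of_nonneg_left (show (1:ℝ) ≤ 1 + γ y by linarith [hγ0 y hy]) hb
      nlinarith
    have hlogconc := strictConcaveOn_log_Ioi.concaveOn.2 (mem_Ioi.2 hpx) (mem_Ioi.2 hpy) ha hb hab
    simp only [smul_eq_mul] at hlogconc
    have hlogmono : Real.log (a * (1 + γ x) + b * (1 + γ y))
        ≤ Real.log (1 + γ (a * x + b * y)) := Real.log_le_log hpos h1
    have hl2 : (0:ℝ) < Real.log 2 := Real.log_pos one_lt_two
    simp only [hgdef, Real.logb]
    rw [show a * (Real.log (1 + γ x) / Real.log 2) + b * (Real.log (1 + γ y) / Real.log 2)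
        = (a * Real.log (1 + γ x) + b * Real.log (1 + γ y)) / Real.log 2 by ring]
    gcongr
    linarith
  have hgmono : MonotoneOn g (Ioo (0:ℝ) T) := by
    intro x hx y hy hxy
    exact Real.logb_le_logb_of_le one_lt_two (hgpos x hx) (by linarith [hγmono hx hy hxy])
  constructor
  · refine hfconc.mul hgconc (fun x hx => (hfpos x hx).le) (fun x hx => hg0 x hx) ?_
    intro x hx y hy hgxy
    have hxy : x < y := by
      by_contra h
      exact absurd (hgmono hy hx (not_lt.1 h)) (not_le.2 hgxy)
    exact (hfanti x y hxy).le
  · intro hstrict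
    have hgstrict : StrictMonoOn g (Ioo (0:ℝ) T) := by
      intro x hx y hy hxy
      exact Real.logb_lt_logb one_lt_two (hgpos x hx) (by linarith [hstrict hx hy hxy])
    have key : ∀ x ∈ Ioo (0:ℝ) T, ∀ y ∈ Ioo (0:ℝ) T, x < y → ∀ a b : ℝ, 0 < a → 0 < b →
        a + b = 1 → a * (f x * g x) + b * (f y * g y) < f (a*x+b*y) * g (a*x+b*y) := by
      intro x hx y hy hxy a b ha hb hab
      have hz : a * x + b * y ∈ Ioo (0:ℝ) T := by
        have := (convex_Ioo (0:ℝ) T) hx hy ha.le hb.le hab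
        simpa using this
      have hfz : f (a*x+b*y) = a * f x + b * f y := haff x y a b hab
      have hgz : a * g x + b * g y ≤ g (a*x+b*y) := by
        have := hgconc.2 hx hy ha.le hb.le hab
        simpa using this
      have hfz0 : 0 ≤ f (a*x+b*y) := (hfpos _ hz).le
      have hflt : f y < f x := hfanti x y hxy
      have hglt : g x < g y := hgstrict hx hy hxy
      have step1 : a * (f x * g x) + b * (f y * g y)
          < (a * f x + b * f y) * (a * g x + b * g y) := by
        have hkey : (a * f x + b * f y) * (a * g x + b * g y)
            - (a * (f x * g x) + b * (f y * g y))
            = a * b * ((f x - f y) * (g y - g x)) := by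
          linear_combination (a * (f x * g x) + b * (f y * g y)) * hab
        have hp := mul_pos (mul_pos ha hb) (mul_pos (sub_pos.2 hflt) (sub_pos.2 hglt))
        linarith
      calc a * (f x * g x) + b * (f y * g y)
          < (a * f x + b * f y) * (a * g x + b * g y) := step1
        _ = f (a*x+b*y) * (a * g x + b * g y) := by rw [hfz]
        _ ≤ f (a*x+b*y) * g (a*x+b*y) := mul_le_mul_of_nonneg_left hgz hfz0
    refine ⟨convex_Ioo 0 T, fun x hx y hy hxy a b ha hb hab => ?_⟩
    simp only [smul_eq_mul]
    show a * (f x * g x) + b * (f y * g y) < f (a*x+b*y) * g (a*x+b*y)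
    rcases hxy.lt_or_gt with h | h
    · exact key x hx y hy h a b ha hb hab
    · have := key y hy x hx h b a hb ha (by linarith)
      have hcomm : b*y + a*x = a*x + b*y := by ring
      rw [hcomm] at this
      linarith
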